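/- Let u : ℤ × ℝ → ℝ, (n,t) ↦ u_n(t), with each u_n differentiable, be a solution of the reduced YdKN equation: for all n ∈ ℤ and t ∈ ℝ, u_{n+1}(t) ≠ u_{n-1}(t) and u_n'(t) = u_n(t)² u_{n+1}(t) u_{n-1}(t)/(u_{n+1}(t) − u_{n-1}(t)). Let λ ∈ ℝ be such that 1 − (−1)ⁿ λ u_n(t) ≠ 0 for all n ∈ ℤ, t ∈ ℝ. Then v_n(t) := u_n(t)/(1 − (−1)ⁿ λ u_n(t)) is again a solution: for all n and t, v_{n+1}(t) ≠ v_{n-1}(t) and v_n'(t) = v_n(t)² v_{n+1}(t) v_{n-1}(t)/(v_{n+1}(t) − v_{n-1}(t)). -/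

import Mathlib

lemma ydkn_key (a b c L e f : ℝ) (hab : a ≠ b) (h0 : 1 - e * L * c ≠ 0)
    (h1 : 1 - f * L * a ≠ 0) (h2 : 1 - f * L * b ≠ 0) :
    c ^ 2 * a * b / (a - b) / (1 - e * L * c) ^ 2 =
      (c / (1 - e * L * c)) ^ 2 * (a / (1 - f * L * a)) * (b / (1 - f * L * b)) /
        (a / (1 - f * L * a) - b / (1 - f * L * b)) := by
  have hab' : a - b ≠ 0 := sub_ne_zero.mpr hab
  have hs : a / (1 - f * L * a) - b / (1 - f * L * b) =
      (a - b) / ((1 - f * L * a) * (1 - f * L * b)) := by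
    rw [div_sub_div _ _ h1 h2]; ring
  rw [hs, div_div_eq_mul_div]
  field_simp
  rw [mul_assoc _ (1 - a * L * f), mul_assoc _ (1 - a * L * f), mul_div_mul_right _ _ (mul_ne_zero (by ring_nf at h1 ⊢; exact h1) (by ring_nf at h2 ⊢; exact h2))]

/-- The symmetry group generated by `X₃ = (−1)ⁿuₙ²∂_{uₙ}` maps solutions of the reduced YdKN
equation `u̇ₙ = uₙ² uₙ₊₁ uₙ₋₁/(uₙ₊₁ − uₙ₋₁)` to solutions: if `uₙ(t)` is a solution and
`1 − (−1)ⁿλuₙ(t)` never vanishes, then `vₙ(t) = uₙ(t)/(1 − (−1)ⁿλuₙ(t))` is again a solution. -/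
theorem ydkn_symmetry_X3 (u : ℤ → ℝ → ℝ) (hu : ∀ n, Differentiable ℝ (u n))
    (hsol : ∀ (n : ℤ) (t : ℝ), u (n + 1) t ≠ u (n - 1) t ∧
      deriv (u n) t =
        (u n t) ^ 2 * u (n + 1) t * u (n - 1) t / (u (n + 1) t - u (n - 1) t))
    (lam : ℝ) (hlam : ∀ (n : ℤ) (t : ℝ), 1 - (-1 : ℝ) ^ n * lam * u n t ≠ 0) :
    ∀ (n : ℤ) (t : ℝ),
      let v : ℤ → ℝ → ℝ := fun m s => u m s / (1 - (-1 : ℝ) ^ m * lam * u m s)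
      v (n + 1) t ≠ v (n - 1) t ∧
        deriv (v n) t =
          (v n t) ^ 2 * v (n + 1) t * v (n - 1) t / (v (n + 1) t - v (n - 1) t) := by
  intro n t v
  have h1 : ((-1 : ℝ)) ^ (n + 1) = -((-1 : ℝ)) ^ n := by
    rw [zpow_add₀ (by norm_num : (-1 : ℝ) ≠ 0)]; ring_nf
  have h2 : ((-1 : ℝ)) ^ (n - 1) = -((-1 : ℝ)) ^ n := by
    rw [zpow_sub₀ (by norm_num : (-1 : ℝ) ≠ 0)]; ring_nf
  have hd0 := hlam n t
  have hd1 := hlam (n + 1) t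
  have hd2 := hlam (n - 1) t
  rw [h1] at hd1
  rw [h2] at hd2
  obtain ⟨hne, hder⟩ := hsol n t
  have hvne : v (n + 1) t ≠ v (n - 1) t := by
    intro h
    simp only [v, h1, h2] at h
    rw [div_eq_div_iff hd1 hd2] at h
    exact hne (by linear_combination h)
  refine ⟨hvne, ?_⟩
  have hdenD : DifferentiableAt ℝ (fun s => 1 - (-1 : ℝ) ^ n * lam * u n s) t :=
    (differentiableAt_const _).sub ((differentiableAt_const _).mul ((hu n) t))
  have hderiv : deriv (v n) t =
      deriv (u n) t / (1 - (-1 : ℝ) ^ n * lam * u n t) ^ 2 := by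
    show deriv (fun s => u n s / (1 - (-1 : ℝ) ^ n * lam * u n s)) t = _
    rw [deriv_fun_div ((hu n) t) hdenD hd0]
    rw [deriv_fun_sub (differentiableAt_const _) (((hu n) t).const_mul _),
      deriv_const, deriv_const_mul _ ((hu n) t)]
    field_simp
    ring
  rw [hderiv, hder]
  simp only [v, h1, h2]
  exact ydkn_key (u (n + 1) t) (u (n - 1) t) (u n t) lam ((-1 : ℝ) ^ n) (-((-1 : ℝ) ^ n))
    hne hd0 hd1 hd2
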